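/- Let a, b, d be complex numbers with a not an integer and d not a nonpositive integer, and extend the Pochhammer symbol by (a)_{-j} = 1/(a-j)_j. Then for all natural numbers m, n, the coefficient of x^m y^n in Η₄(a,b;d;x,y) = ∑_{m,n} ((a)_{m-n}(b)_n/((d)_m m! n!)) x^m y^n equals the corresponding coefficient of ₁F₁(a;d;x)·₁F₁(b;1-a;-y) + ∑_{k≥1}∑_{l=1}^{k} ((-1)^{k+l}(k-1)! (b)_l/((l-1)! l! (k-l)! (1-a)_l (d)_k)) x^k y^l · ₁F₁(a+k;d+k;x)·₁F₁(b+l;1-a+l;-y); explicitly, (a)_{m-n}(b)_n/(m! n!) = (-1)^n (a)_m (b)_n/((1-a)_n m! n!) + ∑_{k=1}^{m} ∑_{l=1}^{min(k,n)} (-1)^{k+n} ((k-1)!/((l-1)! l! (k-l)!)) · (b)_n · (a+k)_{m-k}/((1-a)_n (m-k)! (n-l)!). -/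

import Mathlib

open Finset

/-- Pochhammer symbol (rising factorial): `(a)_k = a (a+1) ⋯ (a+k-1)`. -/
noncomputable def poch (a : ℂ) (k : ℕ) : ℂ := ∏ j ∈ Finset.range k, (a + j)

lemma poch_zero (a : ℂ) : poch a 0 = 1 := by simp [poch]

lemma poch_succ (a : ℂ) (n : ℕ) : poch a (n + 1) = poch a n * (a + n) :=
  Finset.prod_range_succ _ _

lemma poch_succ' (a : ℂ) (n : ℕ) : poch a (n + 1) = a * poch (a + 1) n := by
  unfold poch
  rw [Finset.prod_range_succ']
  simp only [Nat.cast_zero, add_zero, Nat.cast_add, Nat.cast_one]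
  rw [mul_comm]
  congr 1
  refine Finset.prod_congr rfl fun j _ => by push_cast; ring

lemma poch_add (a : ℂ) (j k : ℕ) : poch a (j + k) = poch a j * poch (a + j) k := by
  unfold poch
  rw [Finset.prod_range_add]
  congr 1
  refine Finset.prod_congr rfl fun i _ => by push_cast; ring

lemma poch_sub_nat_ne_zero (a : ℂ) (ha : ∀ z : ℤ, a ≠ (z : ℂ)) (j i : ℕ) :
    poch (a - j) i ≠ 0 := by
  unfold poch
  rw [Finset.prod_ne_zero_iff]
  intro t _ h
  exact ha ((j : ℤ) - t) (by push_cast; linear_combination h)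

lemma poch_one_sub_ne_zero (a : ℂ) (ha : ∀ z : ℤ, a ≠ (z : ℂ)) (i : ℕ) :
    poch (1 - a) i ≠ 0 := by
  unfold poch
  rw [Finset.prod_ne_zero_iff]
  intro t _ h
  exact ha (1 + (t : ℤ)) (by push_cast; linear_combination -h)

lemma poch_reflect (a : ℂ) (n : ℕ) : poch (1 - a) n = (-1 : ℂ) ^ n * poch (a - n) n := by
  unfold poch
  rw [← Finset.prod_range_reflect (fun j => (1 - a + j : ℂ)) n]
  have : ∀ j ∈ Finset.range n, (1 - a + ((n - 1 - j : ℕ) : ℂ)) = (-1) * ((a - n) + j) := by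
    intro j hj
    rw [Finset.mem_range] at hj
    have h1 : ((n - 1 - j : ℕ) : ℂ) = (n : ℂ) - 1 - j := by
      have : n - 1 - j = n - (1 + j) := by omega
      rw [this, Nat.cast_sub (by omega)]
      push_cast; ring
    rw [h1]; ring
  rw [Finset.prod_congr rfl this, Finset.prod_mul_distrib, Finset.prod_const]
  simp

/-- Generalized Pochhammer symbol for integer index:
`(a)_z` is the usual rising factorial for `z ≥ 0`, and `(a)_{-j} = 1/(a-j)_j`. -/
noncomputable def pochZ (a : ℂ) : ℤ → ℂ
  | Int.ofNat k => poch a k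
  | Int.negSucc j => 1 / poch (a - (j + 1 : ℕ)) (j + 1)

lemma pochZ_natCast (a : ℂ) (k : ℕ) : pochZ a (k : ℤ) = poch a k := rfl

lemma pochZ_neg (a : ℂ) (j : ℕ) :
    pochZ a (-((j + 1 : ℕ) : ℤ)) = 1 / poch (a - (j + 1 : ℕ)) (j + 1) := by
  rw [show (-((j + 1 : ℕ) : ℤ)) = Int.negSucc j by rw [Int.negSucc_eq]; push_cast; ring]
  rfl

lemma pochZ_key (a : ℂ) (ha : ∀ z : ℤ, a ≠ (z : ℂ)) (m n : ℕ) :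
    pochZ a ((m : ℤ) - n) * poch (a - n) n = poch (a - n) m := by
  rcases le_or_gt n m with h | h
  · rw [show ((m : ℤ) - n) = ((m - n : ℕ) : ℤ) by omega, pochZ_natCast]
    have : poch (a - n) m = poch (a - n) n * poch (a - n + n) (m - n) := by
      rw [← poch_add]; congr 1; omega
    rw [this]
    have : a - (n : ℂ) + n = a := by ring
    rw [this]; ring
  · obtain ⟨j', hj'⟩ : ∃ j', n - m = j' + 1 := ⟨n - m - 1, by omega⟩
    rw [show ((m : ℤ) - n) = -(((j' + 1 : ℕ)) : ℤ) by push_cast; omega]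
    rw [show (-((j' + 1 : ℕ) : ℤ)) = -(((j' + 1 : ℕ) : ℕ) : ℤ) by push_cast; ring, pochZ_neg]
    have hne : poch (a - ((j' + 1 : ℕ) : ℂ)) (j' + 1) ≠ 0 := poch_sub_nat_ne_zero a ha _ _
    have hsplit : poch (a - n) n = poch (a - n) m * poch (a - n + m) (j' + 1) := by
      rw [← poch_add]; congr 1; omega
    have hcast : a - (n : ℂ) + m = a - ((j' + 1 : ℕ) : ℂ) := by
      have : ((j' + 1 : ℕ) : ℂ) = (n : ℂ) - m := by
        rw [show (j' + 1 : ℕ) = n - m by omega, Nat.cast_sub (by omega)]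
      rw [this]; ring
    rw [hsplit, hcast, one_div, mul_comm (poch (a - (n : ℂ)) m), inv_mul_cancel_left₀ hne]

lemma chu (m : ℕ) : ∀ (a c : ℂ),
    ∑ k ∈ Finset.range (m + 1),
      (-1 : ℂ) ^ k * (m.choose k : ℂ) * poch c k * poch (a + k) (m - k)
      = poch (a - c) m := by
  induction m with
  | zero => intro a c; simp [poch]
  | succ m ih =>
    intro a c
    rw [Finset.sum_range_succ']
    have hstep : ∀ k ∈ Finset.range (m + 1),
        (-1 : ℂ) ^ (k + 1) * ((m + 1).choose (k + 1) : ℂ) * poch c (k + 1) *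
            poch (a + ((k + 1 : ℕ) : ℂ)) (m + 1 - (k + 1))
          = (-c) * ((-1 : ℂ) ^ k * (m.choose k : ℂ) * poch (c + 1) k *
                poch ((a + 1) + ((k : ℕ) : ℂ)) (m - k))
            + (-1 : ℂ) ^ (k + 1) * (m.choose (k + 1) : ℂ) * poch c (k + 1) *
                poch (a + ((k + 1 : ℕ) : ℂ)) (m + 1 - (k + 1)) := by
      intro k hk
      rw [Nat.choose_succ_succ]
      push_cast
      rw [poch_succ' c k]
      simp only [Nat.succ_eq_add_one, Nat.succ_sub_succ]
      have h2 : a + ((k : ℂ) + 1) = (a + 1) + (k : ℂ) := by ring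
      rw [h2]
      ring
    rw [Finset.sum_congr rfl hstep, Finset.sum_add_distrib, ← Finset.mul_sum, ih (a + 1) (c + 1)]
    have hac : a + 1 - (c + 1) = a - c := by ring
    rw [hac]
    -- second part: ∑_{k∈range(m+1)} g2 k + f 0 = (a+m) * poch (a-c) m
    have hsecond :
        (∑ k ∈ Finset.range (m + 1),
            (-1 : ℂ) ^ (k + 1) * (m.choose (k + 1) : ℂ) * poch c (k + 1) *
              poch (a + ((k + 1 : ℕ) : ℂ)) (m + 1 - (k + 1)))
          + (-1 : ℂ) ^ 0 * (((m + 1).choose 0 : ℕ) : ℂ) * poch c 0 *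
              poch (a + ((0 : ℕ) : ℂ)) (m + 1 - 0)
          = (a + m) * poch (a - c) m := by
      have hre : (∑ k ∈ Finset.range (m + 2),
          (-1 : ℂ) ^ k * (m.choose k : ℂ) * poch c k * poch (a + (k : ℂ)) (m + 1 - k))
          = (∑ k ∈ Finset.range (m + 1),
            (-1 : ℂ) ^ (k + 1) * (m.choose (k + 1) : ℂ) * poch c (k + 1) *
              poch (a + ((k + 1 : ℕ) : ℂ)) (m + 1 - (k + 1)))
          + (-1 : ℂ) ^ 0 * (((m + 1).choose 0 : ℕ) : ℂ) * poch c 0 *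
              poch (a + ((0 : ℕ) : ℂ)) (m + 1 - 0) := by
        rw [Finset.sum_range_succ']
        push_cast
        norm_num
      rw [← hre, Finset.sum_range_succ]
      have hzero : (-1 : ℂ) ^ (m + 1) * (m.choose (m + 1) : ℂ) * poch c (m + 1) *
          poch (a + ((m + 1 : ℕ) : ℂ)) (m + 1 - (m + 1)) = 0 := by
        rw [Nat.choose_succ_self]; norm_num
      push_cast at hzero ⊢
      rw [hzero, add_zero]
      have hterm : ∀ k ∈ Finset.range (m + 1),
          (-1 : ℂ) ^ k * (m.choose k : ℂ) * poch c k * poch (a + (k : ℂ)) (m + 1 - k)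
            = ((-1 : ℂ) ^ k * (m.choose k : ℂ) * poch c k * poch (a + (k : ℂ)) (m - k)) *
              (a + m) := by
        intro k hk
        rw [Finset.mem_range] at hk
        have h1 : m + 1 - k = (m - k) + 1 := by omega
        rw [h1, poch_succ]
        have h2 : a + (k : ℂ) + ((m - k : ℕ) : ℂ) = a + m := by
          rw [Nat.cast_sub (by omega)]; ring
        rw [h2]; ring
      rw [Finset.sum_congr rfl hterm, ← Finset.sum_mul, ih a c]
      ring
    rw [add_assoc, hsecond]
    rw [poch_succ]
    ring

lemma fact_mul_poch (n : ℕ) (hn : 1 ≤ n) (k : ℕ) :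
    (((n - 1).factorial : ℂ)) * poch (n : ℂ) k = ((n + k - 1).factorial : ℂ) := by
  induction k with
  | zero => simp [poch_zero]
  | succ k ihk =>
    rw [poch_succ, ← mul_assoc, ihk]
    have h1 : (n + (k + 1) - 1).factorial = (n + k - 1).factorial * (n + k) := by
      rw [show n + (k + 1) - 1 = (n + k - 1) + 1 by omega, Nat.factorial_succ]
      rw [show n + k - 1 + 1 = n + k by omega]; ring
    rw [h1]; push_cast; ring

lemma vand (n k : ℕ) (hn : 1 ≤ n) (hk : 1 ≤ k) :
    ∑ l ∈ Finset.Icc 1 (min k n), (n - 1).choose (l - 1) * k.choose l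
      = (n - 1 + k).choose (k - 1) := by
  rw [Nat.add_choose_eq, Finset.Nat.sum_antidiagonal_eq_sum_range_succ_mk]
  simp only [Nat.succ_eq_add_one]
  rw [show k - 1 + 1 = k by omega]
  rw [← Finset.Ico_add_one_right_eq_Icc, Finset.sum_Ico_eq_sum_range]
  rw [show min k n + 1 - 1 = min k n by omega]
  have hsub : Finset.range (min k n) ⊆ Finset.range k := by
    apply Finset.range_subset_range.2; omega
  rw [← Finset.sum_subset hsub (by
    intro i hi hni
    rw [Finset.mem_range] at hi
    rw [Finset.mem_range, not_lt] at hni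
    have : n - 1 < i := by omega
    rw [Nat.choose_eq_zero_of_lt this, zero_mul])]
  apply Finset.sum_congr rfl
  intro i hi
  rw [Finset.mem_range] at hi
  rw [show 1 + i - 1 = i by omega, show k.choose (k - 1 - i) = k.choose (i + 1) by
    rw [show k - 1 - i = k - (i + 1) by omega, Nat.choose_symm (by omega)]]
  rw [show 1 + i = i + 1 by omega]

lemma innerVand (n k : ℕ) (hn : 1 ≤ n) (hk : 1 ≤ k) :
    ∑ l ∈ Finset.Icc 1 (min k n),
        (((k - 1).factorial : ℂ) * (n.factorial : ℂ)) /
          (((l - 1).factorial : ℂ) * (l.factorial : ℂ) * ((k - l).factorial : ℂ) *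
            ((n - l).factorial : ℂ))
      = poch (n : ℂ) k / (k.factorial : ℂ) := by
  have hterm : ∀ l ∈ Finset.Icc 1 (min k n),
      (((k - 1).factorial : ℂ) * (n.factorial : ℂ)) /
          (((l - 1).factorial : ℂ) * (l.factorial : ℂ) * ((k - l).factorial : ℂ) *
            ((n - l).factorial : ℂ))
        = ((n : ℂ) * (((n - 1).choose (l - 1) * k.choose l : ℕ) : ℂ)) / (k : ℂ) := by
    intro l hl
    rw [Finset.mem_Icc, le_min_iff] at hl
    obtain ⟨hl1, hlk, hln⟩ : 1 ≤ l ∧ l ≤ k ∧ l ≤ n := ⟨hl.1, hl.2.1, hl.2.2⟩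
    have A : (n - 1).choose (l - 1) * (l - 1).factorial * (n - l).factorial
        = (n - 1).factorial := by
      have := Nat.choose_mul_factorial_mul_factorial (show l - 1 ≤ n - 1 by omega)
      rwa [show n - 1 - (l - 1) = n - l by omega] at this
    have B : k.choose l * l.factorial * (k - l).factorial = k.factorial :=
      Nat.choose_mul_factorial_mul_factorial hlk
    have C : n * (n - 1).factorial = n.factorial := Nat.mul_factorial_pred (by omega)
    have D : k * (k - 1).factorial = k.factorial := Nat.mul_factorial_pred (by omega)
    have f1 : ((l - 1).factorial : ℂ) ≠ 0 := Nat.cast_ne_zero.2 (Nat.factorial_ne_zero _)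
    have f2 : ((l).factorial : ℂ) ≠ 0 := Nat.cast_ne_zero.2 (Nat.factorial_ne_zero _)
    have f3 : ((k - l).factorial : ℂ) ≠ 0 := Nat.cast_ne_zero.2 (Nat.factorial_ne_zero _)
    have f4 : ((n - l).factorial : ℂ) ≠ 0 := Nat.cast_ne_zero.2 (Nat.factorial_ne_zero _)
    have f5 : (k : ℂ) ≠ 0 := Nat.cast_ne_zero.2 (by omega)
    have A' : (((n - 1).choose (l - 1) : ℕ) : ℂ) * ((l - 1).factorial : ℂ) *
        ((n - l).factorial : ℂ) = ((n - 1).factorial : ℂ) := by exact_mod_cast A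
    have B' : ((k.choose l : ℕ) : ℂ) * (l.factorial : ℂ) * ((k - l).factorial : ℂ)
        = (k.factorial : ℂ) := by exact_mod_cast B
    have C' : (n : ℂ) * ((n - 1).factorial : ℂ) = (n.factorial : ℂ) := by exact_mod_cast C
    have D' : (k : ℂ) * ((k - 1).factorial : ℂ) = (k.factorial : ℂ) := by exact_mod_cast D
    rw [div_eq_div_iff (mul_ne_zero (mul_ne_zero (mul_ne_zero f1 f2) f3) f4) f5]
    push_cast
    linear_combination (n.factorial : ℂ) * D' -
      ((n : ℂ) * ((k.choose l : ℕ) : ℂ) * (l.factorial : ℂ) * ((k - l).factorial : ℂ)) * A' -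
      ((n : ℂ) * ((n - 1).factorial : ℂ)) * B' - (k.factorial : ℂ) * C'
  rw [Finset.sum_congr rfl hterm, ← Finset.sum_div, ← Finset.mul_sum, ← Nat.cast_sum,
    vand n k hn hk]
  have E : ((n - 1 + k).choose (k - 1) : ℂ) * ((k - 1).factorial : ℂ) * (n.factorial : ℂ)
      = ((n - 1 + k).factorial : ℂ) := by
    have := Nat.choose_mul_factorial_mul_factorial (show k - 1 ≤ n - 1 + k by omega)
    rw [show n - 1 + k - (k - 1) = n by omega] at this
    exact_mod_cast this
  have Dp : ((n - 1).factorial : ℂ) * poch (n : ℂ) k = ((n - 1 + k).factorial : ℂ) := by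
    have := fact_mul_poch n hn k
    rwa [show n + k - 1 = n - 1 + k by omega] at this
  have C : (n : ℂ) * ((n - 1).factorial : ℂ) = (n.factorial : ℂ) := by
    exact_mod_cast Nat.mul_factorial_pred (show n ≠ 0 by omega)
  have D : (k : ℂ) * ((k - 1).factorial : ℂ) = (k.factorial : ℂ) := by
    exact_mod_cast Nat.mul_factorial_pred (show k ≠ 0 by omega)
  have f5 : (k : ℂ) ≠ 0 := Nat.cast_ne_zero.2 (by omega)
  have f6 : ((k).factorial : ℂ) ≠ 0 := Nat.cast_ne_zero.2 (Nat.factorial_ne_zero _)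
  have f7 : ((n - 1).factorial : ℂ) ≠ 0 := Nat.cast_ne_zero.2 (Nat.factorial_ne_zero _)
  have f8 : ((k - 1).factorial : ℂ) ≠ 0 := Nat.cast_ne_zero.2 (Nat.factorial_ne_zero _)
  rw [div_eq_div_iff f5 f6]
  apply mul_left_cancel₀ (mul_ne_zero f8 f7)
  linear_combination (((n - 1 + k).choose (k - 1) : ℂ) * ((k - 1).factorial : ℂ) *
      ((k).factorial : ℂ)) * C + ((k).factorial : ℂ) * E -
    (poch (n : ℂ) k * ((n - 1).factorial : ℂ)) * D - ((k).factorial : ℂ) * Dp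

lemma fracRearrange (s f g1 g2 g3 pb pa P q r nf : ℂ) (h1 : g1 ≠ 0) (h2 : g2 ≠ 0) (h3 : g3 ≠ 0)
    (hP : P ≠ 0) (hq : q ≠ 0) (hr : r ≠ 0) (hnf : nf ≠ 0) :
    s * (f / (g1 * g2 * g3)) * pb * pa / (P * q * r)
      = (s * pb * pa / (P * q * nf)) * ((f * nf) / (g1 * g2 * g3 * r)) := by
  rw [mul_div_assoc', div_mul_eq_mul_div, div_mul_eq_mul_div, div_div, div_mul_div_comm,
    div_eq_div_iff (mul_ne_zero (mul_ne_zero (mul_ne_zero h1 h2) h3) (mul_ne_zero (mul_ne_zero hP hq) hr)) (mul_ne_zero (mul_ne_zero (mul_ne_zero hP hq) hnf) (mul_ne_zero (mul_ne_zero (mul_ne_zero h1 h2) h3) hr))]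
  ring

/-- Decomposition formula (3.21) for `Η₄(a,b;d;x,y)`, coefficient of `x^m y^n`
(after the cancellations `(b)_l(b+l)_{n-l} = (b)_n`, `(d)_k(d+k)_{m-k} = (d)_m`,
`(1-a)_l(1-a+l)_{n-l} = (1-a)_n`). -/
theorem H4_decomposition (a b d : ℂ) (ha : ∀ z : ℤ, a ≠ (z : ℂ))
    (hd : ∀ j : ℕ, d ≠ -(j : ℂ)) (m n : ℕ) :
    pochZ a ((m : ℤ) - n) * poch b n / ((m.factorial : ℂ) * (n.factorial : ℂ)) =
      (-1 : ℂ) ^ n * poch a m * poch b n /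
          (poch (1 - a) n * (m.factorial : ℂ) * (n.factorial : ℂ)) +
        ∑ k ∈ Finset.Icc 1 m, ∑ l ∈ Finset.Icc 1 (min k n),
          (-1 : ℂ) ^ (k + n) *
            (((k - 1).factorial : ℂ) /
              (((l - 1).factorial : ℂ) * (l.factorial : ℂ) * ((k - l).factorial : ℂ))) *
            poch b n * poch (a + k) (m - k) /
            (poch (1 - a) n * ((m - k).factorial : ℂ) * ((n - l).factorial : ℂ)) := by
  have hPne : poch (1 - a) n ≠ 0 := poch_one_sub_ne_zero a ha n
  have hmf : ((m.factorial : ℂ)) ≠ 0 := Nat.cast_ne_zero.2 (Nat.factorial_ne_zero _)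
  have hnf : ((n.factorial : ℂ)) ≠ 0 := Nat.cast_ne_zero.2 (Nat.factorial_ne_zero _)
  have key : ∀ k ∈ Finset.Icc 1 m,
      (∑ l ∈ Finset.Icc 1 (min k n),
        (-1 : ℂ) ^ (k + n) *
            (((k - 1).factorial : ℂ) /
              (((l - 1).factorial : ℂ) * (l.factorial : ℂ) * ((k - l).factorial : ℂ))) *
            poch b n * poch (a + k) (m - k) /
            (poch (1 - a) n * ((m - k).factorial : ℂ) * ((n - l).factorial : ℂ)))
      = ((-1 : ℂ) ^ (k + n) * (m.choose k : ℂ) * poch (n : ℂ) k * poch b n *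
            poch (a + k) (m - k)) /
          (poch (1 - a) n * (m.factorial : ℂ) * (n.factorial : ℂ)) := by
    intro k hk
    rw [Finset.mem_Icc] at hk
    obtain ⟨hk1, hkm⟩ := hk
    by_cases hn0 : n = 0
    · subst hn0
      have h1 : min k 0 = 0 := by omega
      have h2 : poch (0 : ℂ) k = 0 := by
        obtain ⟨k', rfl⟩ : ∃ k', k = k' + 1 := ⟨k - 1, by omega⟩
        rw [poch_succ']
        simp
      rw [h1]
      simp [h2]
    · have hn1 : 1 ≤ n := by omega
      have hmkf : (((m - k).factorial : ℂ)) ≠ 0 := Nat.cast_ne_zero.2 (Nat.factorial_ne_zero _)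
      have hkf : ((k.factorial : ℂ)) ≠ 0 := Nat.cast_ne_zero.2 (Nat.factorial_ne_zero _)
      have hterm : ∀ l ∈ Finset.Icc 1 (min k n),
          (-1 : ℂ) ^ (k + n) *
              (((k - 1).factorial : ℂ) /
                (((l - 1).factorial : ℂ) * (l.factorial : ℂ) * ((k - l).factorial : ℂ))) *
              poch b n * poch (a + k) (m - k) /
              (poch (1 - a) n * ((m - k).factorial : ℂ) * ((n - l).factorial : ℂ))
            = ((-1 : ℂ) ^ (k + n) * poch b n * poch (a + k) (m - k) /
                (poch (1 - a) n * ((m - k).factorial : ℂ) * (n.factorial : ℂ))) *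
              ((((k - 1).factorial : ℂ) * (n.factorial : ℂ)) /
                (((l - 1).factorial : ℂ) * (l.factorial : ℂ) * ((k - l).factorial : ℂ) *
                  ((n - l).factorial : ℂ))) := by
        intro l hl
        exact fracRearrange _ _ _ _ _ _ _ _ _ _ _
          (Nat.cast_ne_zero.2 (Nat.factorial_ne_zero _))
          (Nat.cast_ne_zero.2 (Nat.factorial_ne_zero _))
          (Nat.cast_ne_zero.2 (Nat.factorial_ne_zero _))
          hPne hmkf (Nat.cast_ne_zero.2 (Nat.factorial_ne_zero _)) hnf
      rw [Finset.sum_congr rfl hterm, ← Finset.mul_sum, innerVand n k hn1 hk1]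
      have hchoose : ((m.choose k : ℕ) : ℂ) * (k.factorial : ℂ) * ((m - k).factorial : ℂ)
          = (m.factorial : ℂ) := by exact_mod_cast Nat.choose_mul_factorial_mul_factorial hkm
      rw [div_mul_div_comm, div_eq_div_iff
        (mul_ne_zero (mul_ne_zero (mul_ne_zero hPne hmkf) hnf) hkf)
        (mul_ne_zero (mul_ne_zero hPne hmf) hnf)]
      linear_combination (-((-1 : ℂ) ^ (k + n) * poch b n * poch (a + (k : ℂ)) (m - k) *
        poch (n : ℂ) k * poch (1 - a) n * (n.factorial : ℂ))) * hchoose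
  rw [Finset.sum_congr rfl key]
  have h0 : (-1 : ℂ) ^ n * poch a m * poch b n /
      (poch (1 - a) n * (m.factorial : ℂ) * (n.factorial : ℂ))
      = ((-1 : ℂ) ^ (0 + n) * (m.choose 0 : ℂ) * poch (n : ℂ) 0 * poch b n *
            poch (a + (0 : ℕ)) (m - 0)) /
          (poch (1 - a) n * (m.factorial : ℂ) * (n.factorial : ℂ)) := by
    norm_num [poch_zero]
    ring
  rw [h0]
  rw [show ((-1 : ℂ) ^ (0 + n) * (m.choose 0 : ℂ) * poch (n : ℂ) 0 * poch b n *
            poch (a + (0 : ℕ)) (m - 0)) /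
          (poch (1 - a) n * (m.factorial : ℂ) * (n.factorial : ℂ)) +
        ∑ k ∈ Finset.Icc 1 m,
          ((-1 : ℂ) ^ (k + n) * (m.choose k : ℂ) * poch (n : ℂ) k * poch b n *
            poch (a + k) (m - k)) /
          (poch (1 - a) n * (m.factorial : ℂ) * (n.factorial : ℂ))
      = ∑ k ∈ Finset.range (m + 1),
          ((-1 : ℂ) ^ (k + n) * (m.choose k : ℂ) * poch (n : ℂ) k * poch b n *
            poch (a + k) (m - k)) /
          (poch (1 - a) n * (m.factorial : ℂ) * (n.factorial : ℂ)) by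
    rw [Finset.range_eq_Ico, Finset.sum_eq_sum_Ico_succ_bot (by omega : 0 < m + 1),
      ← Finset.Ico_add_one_right_eq_Icc]]
  rw [← Finset.sum_div]
  have hsum : ∑ k ∈ Finset.range (m + 1),
      (-1 : ℂ) ^ (k + n) * (m.choose k : ℂ) * poch (n : ℂ) k * poch b n *
        poch (a + k) (m - k)
      = (-1 : ℂ) ^ n * poch b n * poch (a - n) m := by
    have : ∀ k ∈ Finset.range (m + 1),
        (-1 : ℂ) ^ (k + n) * (m.choose k : ℂ) * poch (n : ℂ) k * poch b n *
          poch (a + k) (m - k)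
        = ((-1 : ℂ) ^ n * poch b n) *
            ((-1 : ℂ) ^ k * (m.choose k : ℂ) * poch (n : ℂ) k * poch (a + k) (m - k)) := by
      intro k _
      rw [pow_add]
      ring
    rw [Finset.sum_congr rfl this, ← Finset.mul_sum, chu m a (n : ℂ)]
  rw [hsum]
  have hrefl : poch (1 - a) n = (-1 : ℂ) ^ n * poch (a - n) n := poch_reflect a n
  have hkey : pochZ a ((m : ℤ) - n) * poch (a - n) n = poch (a - n) m := pochZ_key a ha m n
  have hpo : poch (a - (n : ℂ)) n ≠ 0 := poch_sub_nat_ne_zero a ha n n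
  rw [hrefl]
  rw [div_eq_div_iff (by exact mul_ne_zero hmf hnf)
    (mul_ne_zero (mul_ne_zero (mul_ne_zero (pow_ne_zero n (by norm_num)) hpo) hmf) hnf)]
  linear_combination ((-1 : ℂ) ^ n * poch b n * (m.factorial : ℂ) * (n.factorial : ℂ)) * hkey
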